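/- Let μ be the Bernoulli measure on Cantor space 2^ω. For all measurable sets A, B ⊆ 2^ω with μ(A) > 0 and μ(B) > 0, there exists s ∈ 2^ω with finite support (s(n) is false for all but finitely many n) such that μ((s + A) ∩ B) > 0, where s + A = {s + x : x ∈ A} and + denotes coordinatewise addition mod 2 (xor). -/

import Mathlib

open MeasureTheory

/-- `μ` is the Bernoulli measure on `ι → Bool`: the product over `ι` of the uniform
probability measure on `Bool`.  It is characterized as the unique probability measure
giving each cylinder determined by values on a finite set `s` measure `(1/2)^|s|`. -/
def IsBernoulliMeasure {ι : Type*} (μ : Measure (ι → Bool)) : Prop :=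
  IsProbabilityMeasure μ ∧
    ∀ (s : Finset ι) (f : ι → Bool),
      μ {x : ι → Bool | ∀ i ∈ s, x i = f i} = (2 : ENNReal)⁻¹ ^ s.card

/-- The translate `s + A` of a set `A ⊆ 2^ω` by `s ∈ 2^ω`, where `+` is coordinatewise
addition mod 2 (xor). -/
def xorTranslate (s : ℕ → Bool) (A : Set (ℕ → Bool)) : Set (ℕ → Bool) :=
  (fun x : ℕ → Bool => fun n => xor (s n) (x n)) '' A

namespace Stmt12Aux

def Cyl : Set (Set (ℕ → Bool)) :=
  {C | ∃ (t : Finset ℕ) (f : ℕ → Bool), C = {x | ∀ i ∈ t, x i = f i}}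

lemma bool_xor_eq_iff (a b c : Bool) : xor a b = c ↔ b = xor a c := by
  cases a <;> cases b <;> cases c <;> decide

def φ (s : ℕ → Bool) (x : ℕ → Bool) : ℕ → Bool := fun n => xor (s n) (x n)

lemma measurable_phi (s : ℕ → Bool) : Measurable (φ s) :=
  measurable_pi_lambda _ fun n => measurable_from_top.comp (measurable_pi_apply n)

lemma phi_phi (s x : ℕ → Bool) : φ s (φ s x) = x := by
  funext n; simp [φ]

lemma cyl_meas (t : Finset ℕ) (f : ℕ → Bool) :
    MeasurableSet {x : ℕ → Bool | ∀ i ∈ t, x i = f i} := by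
  have : {x : ℕ → Bool | ∀ i ∈ t, x i = f i}
      = ⋂ i ∈ t, (fun x : ℕ → Bool => x i) ⁻¹' {f i} := by
    ext x; simp
  rw [this]
  exact MeasurableSet.biInter t.countable_toSet
    (fun i _ => measurable_pi_apply i (measurableSet_singleton _))

lemma isPiSystem_Cyl : IsPiSystem Cyl := by
  rintro C ⟨t, f, rfl⟩ C' ⟨t', f', rfl⟩ hne
  obtain ⟨y, hy1, hy2⟩ := hne
  refine ⟨t ∪ t', fun i => if i ∈ t then f i else f' i, ?_⟩
  ext x
  simp only [Set.mem_inter_iff, Set.mem_setOf_eq, Finset.mem_union]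
  constructor
  · rintro ⟨h1, h2⟩ i hi
    by_cases hit : i ∈ t
    · simp [hit, h1 i hit]
    · rcases hi with hi | hi
      · exact absurd hi hit
      · simp [hit, h2 i hi]
  · intro h
    constructor
    · intro i hi
      have := h i (Or.inl hi); simpa [hi] using this
    · intro i hi
      have := h i (Or.inr hi)
      by_cases hit : i ∈ t
      · simp only [hit, if_true] at this
        rw [this, ← hy1 i hit, hy2 i hi]
      · simpa [hit] using this

lemma gen_eq : (inferInstance : MeasurableSpace (ℕ → Bool))
    = MeasurableSpace.generateFrom Cyl := by
  apply le_antisymm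
  · refine iSup_le fun i => ?_
    have : @Measurable (ℕ → Bool) Bool (MeasurableSpace.generateFrom Cyl) ⊤
        (fun x => x i) := by
      refine @measurable_to_countable' Bool (ℕ → Bool) _ _ (MeasurableSpace.generateFrom Cyl) _ (fun b => ?_)
      refine MeasurableSpace.measurableSet_generateFrom ⟨{i}, fun _ => b, ?_⟩
      ext x; simp
    exact measurable_iff_comap_le.mp this
  · refine MeasurableSpace.generateFrom_le ?_
    rintro C ⟨t, f, rfl⟩
    exact cyl_meas t f

lemma mp {μ : Measure (ℕ → Bool)} (hμ : IsBernoulliMeasure μ) (s : ℕ → Bool) :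
    MeasurePreserving (φ s) μ μ := by
  haveI := hμ.1
  refine ⟨measurable_phi s, ?_⟩
  symm
  refine ext_of_generate_finite Cyl gen_eq isPiSystem_Cyl ?_ ?_
  · rintro C ⟨t, f, rfl⟩
    rw [Measure.map_apply (measurable_phi s) (cyl_meas t f)]
    have hp : φ s ⁻¹' {x : ℕ → Bool | ∀ i ∈ t, x i = f i}
        = {x | ∀ i ∈ t, x i = xor (s i) (f i)} := by
      ext x
      simp only [Set.mem_preimage, φ, Set.mem_setOf_eq]
      exact forall₂_congr fun i _ => bool_xor_eq_iff _ _ _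
    rw [hp, hμ.2 t f, hμ.2 t (fun i => xor (s i) (f i))]
  · rw [Measure.map_apply (measurable_phi s) MeasurableSet.univ]
    simp

end Stmt12Aux

open scoped symmDiff in
open Stmt12Aux in
/-- Let `μ` be the Bernoulli measure on Cantor space `2^ω`.  For all measurable
`A, B ⊆ 2^ω` of positive measure there is an `s ∈ 2^ω` with finite support
(`s n = false` for all but finitely many `n`) such that `μ((s + A) ∩ B) > 0`,
where `+` is coordinatewise addition mod 2. -/
theorem stmt12 (μ : Measure (ℕ → Bool)) (hμ : IsBernoulliMeasure μ)
    (A B : Set (ℕ → Bool)) (hA : MeasurableSet A) (hB : MeasurableSet B)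
    (hApos : 0 < μ A) (hBpos : 0 < μ B) :
    ∃ s : ℕ → Bool, {n : ℕ | s n = true}.Finite ∧
      0 < μ (xorTranslate s A ∩ B) := by
  classical
  haveI := hμ.1
  set se : Finset ℕ → (ℕ → Bool) := fun e n => decide (n ∈ e) with hse
  set T : Set (ℕ → Bool) := ⋃ e : Finset ℕ, φ (se e) ⁻¹' A with hT
  have hTm : MeasurableSet T := MeasurableSet.iUnion fun e => (measurable_phi _) hA
  -- A ⊆ T
  have hsub : A ⊆ T := by
    intro x hx
    refine Set.mem_iUnion.2 ⟨∅, ?_⟩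
    have : φ (se ∅) x = x := by funext n; simp [φ, hse]
    simpa [Set.mem_preimage, this]
  -- composition
  have hcomp : ∀ (d e : Finset ℕ) (x : ℕ → Bool),
      φ (se d) (φ (se e) x) = φ (se (d ∆ e)) x := by
    intro d e x; funext n
    simp only [φ, hse]
    by_cases hd : n ∈ d <;> by_cases he : n ∈ e <;>
      simp [hd, he, Finset.mem_symmDiff]
  -- invariance of T
  have hinv : ∀ e : Finset ℕ, φ (se e) ⁻¹' T = T := by
    intro e
    ext x
    simp only [hT, Set.mem_preimage, Set.mem_iUnion]
    constructor
    · rintro ⟨d, hd⟩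
      rw [hcomp] at hd
      exact ⟨d ∆ e, hd⟩
    · rintro ⟨d, hd⟩
      refine ⟨d ∆ e, ?_⟩
      rw [hcomp, symmDiff_symmDiff_cancel_right]
      exact hd
  -- translation between cylinders
  have hcylT : ∀ (t : Finset ℕ) (f g : ℕ → Bool),
      μ (T ∩ {x | ∀ i ∈ t, x i = f i}) = μ (T ∩ {x | ∀ i ∈ t, x i = g i}) := by
    intro t f g
    set e := t.filter (fun n => xor (f n) (g n) = true) with he
    have hsee : ∀ n ∈ t, se e n = xor (f n) (g n) := by
      intro n hn
      cases hf : (f n) <;> cases hg : (g n) <;>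
        simp [hse, he, Finset.mem_filter, hn, hf, hg]
    have hpre : φ (se e) ⁻¹' (T ∩ {x | ∀ i ∈ t, x i = g i})
        = T ∩ {x | ∀ i ∈ t, x i = f i} := by
      rw [Set.preimage_inter, hinv e]
      congr 1
      ext x
      simp only [Set.mem_preimage, φ, Set.mem_setOf_eq]
      refine forall₂_congr fun i hi => ?_
      rw [bool_xor_eq_iff, hsee i hi]
      constructor
      · intro h; rw [h]; cases f i <;> cases g i <;> rfl
      · intro h; rw [h]; cases f i <;> cases g i <;> rfl
    calc μ (T ∩ {x | ∀ i ∈ t, x i = f i})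
        = μ (φ (se e) ⁻¹' (T ∩ {x | ∀ i ∈ t, x i = g i})) := by rw [hpre]
      _ = μ (T ∩ {x | ∀ i ∈ t, x i = g i}) :=
          (mp hμ (se e)).measure_preimage
            ((hTm.inter (cyl_meas t g)).nullMeasurableSet)
  -- independence of T from cylinders
  have hTC : ∀ C ∈ Cyl, μ (T ∩ C) = μ T * μ C := by
    rintro C ⟨t, f, rfl⟩
    set ext' : (↥t → Bool) → (ℕ → Bool) :=
      fun g n => if h : n ∈ t then g ⟨n, h⟩ else false with hext
    have hcover : (Set.univ : Set (ℕ → Bool))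
        = ⋃ g ∈ (Finset.univ : Finset (↥t → Bool)),
            {x : ℕ → Bool | ∀ i ∈ t, x i = ext' g i} := by
      ext x
      simp only [Set.mem_univ, true_iff, Set.mem_iUnion, Finset.mem_univ,
        Set.mem_setOf_eq, exists_true_left]
      refine ⟨fun i => x i, fun i hi => ?_⟩
      simp [hext, hi]
    have hdisj : ((Finset.univ : Finset (↥t → Bool)) : Set (↥t → Bool)).PairwiseDisjoint
        (fun g => T ∩ {x : ℕ → Bool | ∀ i ∈ t, x i = ext' g i}) := by
      intro g1 _ g2 _ hne
      refine Set.disjoint_left.2 ?_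
      rintro x ⟨_, h1⟩ ⟨_, h2⟩
      apply hne
      funext i
      have e1 := h1 i.1 i.2
      have e2 := h2 i.1 i.2
      have : ext' g1 i.1 = ext' g2 i.1 := by rw [← e1, e2]
      simpa [hext, i.2] using this
    have hsum : μ T = ∑ g : (↥t → Bool), μ (T ∩ {x | ∀ i ∈ t, x i = ext' g i}) := by
      have : T = ⋃ g ∈ (Finset.univ : Finset (↥t → Bool)),
          T ∩ {x : ℕ → Bool | ∀ i ∈ t, x i = ext' g i} := by
        conv_lhs => rw [← Set.inter_univ T, hcover]
        simp [Set.inter_iUnion]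
      conv_lhs => rw [this]
      rw [measure_biUnion_finset hdisj
        (fun g _ => hTm.inter (cyl_meas t (ext' g)))]
    have hconst : ∀ g : (↥t → Bool),
        μ (T ∩ {x | ∀ i ∈ t, x i = ext' g i}) = μ (T ∩ {x | ∀ i ∈ t, x i = f i}) :=
      fun g => hcylT t (ext' g) f
    rw [Finset.sum_congr rfl (fun g _ => hconst g), Finset.sum_const,
      Finset.card_univ] at hsum
    have hcard : Fintype.card (↥t → Bool) = 2 ^ t.card := by
      rw [Fintype.card_fun]
      simp
    rw [hcard, nsmul_eq_mul] at hsum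
    push_cast at hsum
    have h2 : ((2 : ENNReal) ^ t.card) ≠ 0 := by positivity
    have h2' : ((2 : ENNReal) ^ t.card) ≠ ⊤ := by
      exact ENNReal.pow_ne_top (by norm_num)
    have key : μ (T ∩ {x | ∀ i ∈ t, x i = f i})
        = μ T * ((2 : ENNReal) ^ t.card)⁻¹ := by
      rw [hsum, mul_comm ((2 : ENNReal) ^ t.card), mul_assoc,
        ENNReal.mul_inv_cancel h2 h2', mul_one]
    rw [key, hμ.2 t f, ENNReal.inv_pow]
  -- μ (T ∩ S) = μ T * μ S for all measurable S
  have hrestrict : μ.restrict T = (μ T) • μ := by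
    refine ext_of_generate_finite Cyl gen_eq isPiSystem_Cyl ?_ ?_
    · rintro C hC
      obtain ⟨t, f, rfl⟩ := hC
      rw [Measure.restrict_apply (cyl_meas t f), Set.inter_comm,
        hTC _ ⟨t, f, rfl⟩, Measure.smul_apply, smul_eq_mul]
    · rw [Measure.restrict_apply MeasurableSet.univ, Set.univ_inter,
        Measure.smul_apply, smul_eq_mul, measure_univ, mul_one]
  have hTT : μ T = μ T * μ T := by
    have := congrArg (fun ν : Measure (ℕ → Bool) => ν T) hrestrict
    simpa [Measure.restrict_apply hTm, Set.inter_self] using this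
  have hT1 : μ T = 1 := by
    have h0 : μ T ≠ 0 := (lt_of_lt_of_le hApos (measure_mono hsub)).ne'
    have htop : μ T ≠ ⊤ := (measure_lt_top μ T).ne
    have : μ T * 1 = μ T * μ T := by rw [mul_one]; exact hTT
    exact ((ENNReal.mul_right_inj h0 htop).mp this).symm
  -- μ (B ∩ T) = μ B
  have hBT : μ (B ∩ T) = μ B := by
    have hcompl : μ Tᶜ = 0 := by
      rw [measure_compl hTm (measure_lt_top μ T).ne, hT1, measure_univ, tsub_self]
    have := measure_inter_add_diff (μ := μ) B hTm
    have hd : μ (B \ T) = 0 :=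
      measure_mono_null (Set.diff_subset_compl B T) hcompl
    rw [hd, add_zero] at this
    exact this
  have hpos : 0 < μ (⋃ e : Finset ℕ, B ∩ φ (se e) ⁻¹' A) := by
    rw [← Set.inter_iUnion, ← hT]
    rw [hBT]
    exact hBpos
  have : ∃ e : Finset ℕ, 0 < μ (B ∩ φ (se e) ⁻¹' A) := by
    by_contra h
    push_neg at h
    have : μ (⋃ e : Finset ℕ, B ∩ φ (se e) ⁻¹' A) = 0 :=
      measure_iUnion_null fun e => le_antisymm (h e) zero_le
    rw [this] at hpos
    exact lt_irrefl _ hpos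
  obtain ⟨e, he⟩ := this
  refine ⟨se e, ?_, ?_⟩
  · have : {n : ℕ | se e n = true} = ↑e := by
      ext n; simp [hse]
    rw [this]
    exact e.finite_toSet
  · have himg : xorTranslate (se e) A = φ (se e) ⁻¹' A := by
      ext x
      constructor
      · rintro ⟨a, ha, rfl⟩
        show φ (se e) (φ (se e) a) ∈ A
        rw [phi_phi]
        exact ha
      · intro hx
        exact ⟨φ (se e) x, hx, by funext n; simp [φ]⟩
    rw [himg, Set.inter_comm]
    exact he
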